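/- Let (P₁,…,P_J) be a multivariate species sampling process on 𝕏 = ℝ with non-atomic base measure P₀ having finite second moment, and let X be a sample from (P₁,…,P_J). Then for all j, k ∈ {1,…,J} and all indices i, m with (j,i) ≠ (k,m): Corr(X_{j,i}, X_{k,m}) = ℙ(X_{j,i} = X_{k,m}). (Each X_{j,i} has marginal law P₀, and since P₀ is non-atomic with finite second moment its variance is finite and strictly positive, so the correlation is well defined.) -/

import Mathlib

open MeasureTheory ProbabilityTheory
open scoped ENNReal
set_option linter.unusedSectionVars false

namespace MSSP

variable {Ω : Type*} [MeasurableSpace Ω] {𝕏 : Type*} [MeasurableSpace 𝕏]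

/-- The species-sampling mixture measure `∑ₕ wₕ δ_{aₕ} + (1 - ∑ₕ wₕ) P₀`. -/
noncomputable def mixM (P₀ : Measure 𝕏) (w : ℕ → ℝ) (a : ℕ → 𝕏) : Measure 𝕏 :=
  Measure.sum (fun h => ENNReal.ofReal (w h) • Measure.dirac (a h)) +
    ENNReal.ofReal (1 - ∑' h, w h) • P₀

/-- `(P j)_{j}` is a multivariate species sampling process with base measure `P₀`,
weight array `π` and atoms `θ`. -/
structure IsMSSPwith {ι : Type*} (Pr : Measure Ω) (P₀ : Measure 𝕏)
    (P : ι → Ω → Measure 𝕏) (π : ι → ℕ → Ω → ℝ) (θ : ℕ → Ω → 𝕏) : Prop where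
  measP : ∀ j (A : Set 𝕏), MeasurableSet A → Measurable fun ω => P j ω A
  probP : ∀ j ω, IsProbabilityMeasure (P j ω)
  measπ : ∀ j h, Measurable (π j h)
  subprob : ∀ j, ∀ᵐ ω ∂Pr, (∀ h, 0 ≤ π j h ω ∧ π j h ω ≤ 1) ∧ ∑' h, π j h ω ≤ 1
  measθ : ∀ h, Measurable (θ h)
  lawθ : ∀ h, Measure.map (θ h) Pr = P₀
  iidθ : iIndepFun (m := fun _ : ℕ => ‹MeasurableSpace 𝕏›) θ Pr
  indepθπ : IndepFun (fun ω (h : ℕ) => θ h ω) (fun ω (j : ι) (h : ℕ) => π j h ω) Pr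
  repr : ∀ j, ∀ᵐ ω ∂Pr, P j ω = mixM P₀ (fun h => π j h ω) (fun h => θ h ω)

/-- `(P j)_j` is a multivariate species sampling process with base measure `P₀`. -/
def IsMSSP {ι : Type*} (Pr : Measure Ω) (P₀ : Measure 𝕏)
    (P : ι → Ω → Measure 𝕏) : Prop :=
  ∃ π θ, IsMSSPwith Pr P₀ P π θ

/-- `X` is a sample from the vector of random probability measures `P`:
conditionally on `P` the entries are independent, with `X j i` distributed as `P j`. -/
def IsSample {ι : Type*} (Pr : Measure Ω) (P : ι → Ω → Measure 𝕏)
    (X : ι → ℕ → Ω → 𝕏) : Prop :=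
  (∀ j i, Measurable (X j i)) ∧
  ∀ (s : Finset (ι × ℕ)) (A : ι × ℕ → Set 𝕏), (∀ p ∈ s, MeasurableSet (A p)) →
    Pr {ω | ∀ p ∈ s, X p.1 p.2 ω ∈ A p} = ∫⁻ ω, ∏ p ∈ s, P p.1 ω (A p) ∂Pr

/-- Covariance of two real random variables. -/
noncomputable def covR (Pr : Measure Ω) (f g : Ω → ℝ) : ℝ :=
  ∫ ω, f ω * g ω ∂Pr - (∫ ω, f ω ∂Pr) * (∫ ω, g ω ∂Pr)

/-- Correlation of two real random variables. -/
noncomputable def corrR (Pr : Measure Ω) (f g : Ω → ℝ) : ℝ :=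
  covR Pr f g / (Real.sqrt (variance f Pr) * Real.sqrt (variance g Pr))


/-! ### Auxiliary definitions and lemmas -/

section Aux

variable {ι : Type*}

/-- Weight as an `ℝ≥0∞`-valued function. -/
noncomputable def Wf (π : ι → ℕ → Ω → ℝ) (j : ι) (n : ℕ) (ω : Ω) : ℝ≥0∞ :=
  ENNReal.ofReal (π j n ω)

/-- Remaining mass as an `ℝ≥0∞`-valued function. -/
noncomputable def Cf (π : ι → ℕ → Ω → ℝ) (j : ι) (ω : Ω) : ℝ≥0∞ :=
  1 - ∑' n, ENNReal.ofReal (π j n ω)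

/-- Indicator of `A` evaluated at the `n`-th atom. -/
noncomputable def Ifn (θ : ℕ → Ω → ℝ) (A : Set ℝ) (n : ℕ) (ω : Ω) : ℝ≥0∞ :=
  A.indicator 1 (θ n ω)

/-- Cross moments of the weights. -/
noncomputable def ew (Pr : Measure Ω) (π : ι → ℕ → Ω → ℝ) (j k : ι) (n l : ℕ) : ℝ≥0∞ :=
  ∫⁻ ω, Wf π j n ω * Wf π k l ω ∂Pr

/-- The tie weight `p`. -/
noncomputable def pwt (Pr : Measure Ω) (π : ι → ℕ → Ω → ℝ) (j k : ι) : ℝ≥0∞ :=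
  ∑' n, ew Pr π j k n n

open Classical in
/-- The non-tie weight `q`. -/
noncomputable def qwt (Pr : Measure Ω) (π : ι → ℕ → Ω → ℝ) (j k : ι) : ℝ≥0∞ :=
  (∑' n, ∑' l, if l = n then 0 else ew Pr π j k n l)
    + ((∑' n, ∫⁻ ω, Wf π j n ω * Cf π k ω ∂Pr)
    + ((∑' n, ∫⁻ ω, Cf π j ω * Wf π k n ω ∂Pr)
    + ∫⁻ ω, Cf π j ω * Cf π k ω ∂Pr))

variable {Pr : Measure Ω} {P₀ : Measure ℝ} {P : ι → Ω → Measure ℝ}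
  {π : ι → ℕ → Ω → ℝ} {θ : ℕ → Ω → ℝ} {X : ι → ℕ → Ω → ℝ}

lemma measWf (hπ : ∀ j n, Measurable (π j n)) (j : ι) (n : ℕ) : Measurable (Wf π j n) :=
  ENNReal.measurable_ofReal.comp (hπ j n)

lemma measCf (hπ : ∀ j n, Measurable (π j n)) (j : ι) : Measurable (Cf π j) :=
  measurable_const.sub (Measurable.ennreal_tsum fun n => ENNReal.measurable_ofReal.comp (hπ j n))

lemma measIfn (hθ : ∀ n, Measurable (θ n)) {A : Set ℝ} (hA : MeasurableSet A) (n : ℕ) :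
    Measurable (Ifn θ A n) :=
  (measurable_one.indicator hA).comp (hθ n)

lemma measG_eval (a : ι) (b : ℕ) :
    Measurable fun u : ι → ℕ → ℝ => ENNReal.ofReal (u a b) :=
  ENNReal.measurable_ofReal.comp ((measurable_pi_apply b).comp (measurable_pi_apply a))

lemma measG_C (a : ι) :
    Measurable fun u : ι → ℕ → ℝ => 1 - ∑' n, ENNReal.ofReal (u a n) :=
  measurable_const.sub (Measurable.ennreal_tsum fun n => measG_eval a n)

lemma mixM_apply (P₀ : Measure 𝕏) (w : ℕ → ℝ) (a : ℕ → 𝕏) {A : Set 𝕏} (hA : MeasurableSet A) :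
    mixM P₀ w a A = (∑' n, ENNReal.ofReal (w n) * A.indicator 1 (a n)) +
      ENNReal.ofReal (1 - ∑' n, w n) * P₀ A := by
  simp [mixM, Measure.sum_apply _ hA, Measure.smul_apply, smul_eq_mul,
    Measure.dirac_apply' _ hA]

variable [IsProbabilityMeasure Pr] [IsProbabilityMeasure P₀]

lemma ae_mix (h : IsMSSPwith Pr P₀ P π θ) (j : ι) :
    ∀ᵐ ω ∂Pr, (∀ A : Set ℝ, MeasurableSet A →
        P j ω A = (∑' n, Wf π j n ω * Ifn θ A n ω) + Cf π j ω * P₀ A) ∧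
      (∑' n, Wf π j n ω) + Cf π j ω = 1 := by
  filter_upwards [h.repr j, h.subprob j] with ω hrepr hsub
  have huniv : mixM P₀ (fun n => π j n ω) (fun n => θ n ω) Set.univ = 1 := by
    rw [← hrepr]; exact (h.probP j ω).measure_univ
  rw [mixM_apply _ _ _ MeasurableSet.univ] at huniv
  simp only [Set.indicator_univ, Pi.one_apply, mul_one, measure_univ] at huniv
  have hTtop : (∑' n, ENNReal.ofReal (π j n ω)) ≠ ⊤ := by
    intro hc; rw [hc] at huniv; simp at huniv
  have hofc : ENNReal.ofReal (1 - ∑' n, π j n ω)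
      = 1 - ∑' n, ENNReal.ofReal (π j n ω) := by
    have h1 : (∑' n, π j n ω) = (∑' n, ENNReal.ofReal (π j n ω)).toReal := by
      rw [ENNReal.tsum_toReal_eq (fun n => ENNReal.ofReal_ne_top)]
      exact tsum_congr fun n => (ENNReal.toReal_ofReal (hsub.1 n).1).symm
    rw [h1, ENNReal.ofReal_sub _ ENNReal.toReal_nonneg, ENNReal.ofReal_one,
      ENNReal.ofReal_toReal hTtop]
  have hT1 : (∑' n, ENNReal.ofReal (π j n ω)) ≤ 1 := huniv ▸ le_self_add
  constructor
  · intro A hA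
    simp only [Wf, Ifn, Cf]
    rw [hrepr, mixM_apply _ _ _ hA, hofc]
  · simp only [Wf, Cf]
    exact add_tsub_cancel_of_le hT1

section Indep

variable (hθ : ∀ n, Measurable (θ n)) (hπ : ∀ j n, Measurable (π j n))
  (hind : IndepFun (fun ω (h : ℕ) => θ h ω) (fun ω (j : ι) (h : ℕ) => π j h ω) Pr)

include hθ hπ hind in
lemma indep_lint (F : (ℕ → ℝ) → ℝ≥0∞) (hF : Measurable F)
    (G : (ι → ℕ → ℝ) → ℝ≥0∞) (hG : Measurable G) :
    ∫⁻ ω, F (fun n => θ n ω) * G (fun j' n => π j' n ω) ∂Pr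
      = (∫⁻ ω, F (fun n => θ n ω) ∂Pr) * ∫⁻ ω, G (fun j' n => π j' n ω) ∂Pr := by
  have hmθ : Measurable (fun ω (n : ℕ) => θ n ω) :=
    measurable_pi_lambda _ fun n => hθ n
  have hmπ : Measurable (fun ω (j : ι) (n : ℕ) => π j n ω) :=
    measurable_pi_lambda _ fun j => measurable_pi_lambda _ fun n => hπ j n
  have h1 : IndepFun (F ∘ fun ω n => θ n ω) (G ∘ fun ω j' n => π j' n ω) Pr :=
    hind.comp hF hG
  have := lintegral_mul_eq_lintegral_mul_lintegral_of_indepFun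
    (hF.comp hmθ) (hG.comp hmπ) h1
  simpa [Function.comp] using this

variable (hlaw : ∀ n, Measure.map (θ n) Pr = P₀)

include hθ hlaw in
lemma lint_theta_one (n : ℕ) (f : ℝ → ℝ≥0∞) (hf : Measurable f) :
    ∫⁻ ω, f (θ n ω) ∂Pr = ∫⁻ x, f x ∂P₀ := by
  rw [← hlaw n, lintegral_map hf (hθ n)]

include hθ hlaw in
lemma lint_theta_two (hiid : iIndepFun (m := fun _ : ℕ => (inferInstance : MeasurableSpace ℝ)) θ Pr)
    {n l : ℕ} (hnl : n ≠ l) {A B : Set ℝ} (hA : MeasurableSet A) (hB : MeasurableSet B) :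
    ∫⁻ ω, Ifn θ A n ω * Ifn θ B l ω ∂Pr = P₀ A * P₀ B := by
  have mA : Measurable (A.indicator (1 : ℝ → ℝ≥0∞)) := measurable_one.indicator hA
  have mB : Measurable (B.indicator (1 : ℝ → ℝ≥0∞)) := measurable_one.indicator hB
  have h2 : IndepFun (A.indicator 1 ∘ θ n) (B.indicator 1 ∘ θ l) Pr :=
    (hiid.indepFun hnl).comp mA mB
  have := lintegral_mul_eq_lintegral_mul_lintegral_of_indepFun
    (mA.comp (hθ n)) (mB.comp (hθ l)) h2
  simp only [Function.comp, Pi.mul_apply] at this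
  calc ∫⁻ ω, Ifn θ A n ω * Ifn θ B l ω ∂Pr
      = (∫⁻ ω, A.indicator 1 (θ n ω) ∂Pr) * ∫⁻ ω, B.indicator 1 (θ l ω) ∂Pr := this
    _ = P₀ A * P₀ B := by
        rw [lint_theta_one hθ hlaw n _ mA, lint_theta_one hθ hlaw l _ mB,
          lintegral_indicator_one hA, lintegral_indicator_one hB]

include hθ hπ hind hlaw in
lemma lint_I_G {A : Set ℝ} (hA : MeasurableSet A) (n : ℕ)
    (G : (ι → ℕ → ℝ) → ℝ≥0∞) (hG : Measurable G) :
    ∫⁻ ω, Ifn θ A n ω * G (fun j' n' => π j' n' ω) ∂Pr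
      = P₀ A * ∫⁻ ω, G (fun j' n' => π j' n' ω) ∂Pr := by
  have := indep_lint hθ hπ hind (fun u => A.indicator 1 (u n))
    ((measurable_one.indicator hA).comp (measurable_pi_apply n)) G hG
  simp only [Ifn]
  rw [this, lint_theta_one hθ hlaw n _ (measurable_one.indicator hA),
    lintegral_indicator_one hA]

include hθ hπ hind hlaw in
lemma lint_II_G (hiid : iIndepFun (m := fun _ : ℕ => (inferInstance : MeasurableSpace ℝ)) θ Pr)
    {A B : Set ℝ} (hA : MeasurableSet A) (hB : MeasurableSet B)
    {n l : ℕ} (hnl : n ≠ l)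
    (G : (ι → ℕ → ℝ) → ℝ≥0∞) (hG : Measurable G) :
    ∫⁻ ω, Ifn θ A n ω * Ifn θ B l ω * G (fun j' n' => π j' n' ω) ∂Pr
      = (P₀ A * P₀ B) * ∫⁻ ω, G (fun j' n' => π j' n' ω) ∂Pr := by
  have := indep_lint hθ hπ hind (fun u => A.indicator 1 (u n) * B.indicator 1 (u l))
    (((measurable_one.indicator hA).comp (measurable_pi_apply n)).mul
      ((measurable_one.indicator hB).comp (measurable_pi_apply l))) G hG
  simp only [Ifn]
  rw [this, ← lint_theta_two hθ hlaw hiid hnl hA hB]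
  rfl

end Indep


lemma lint_P_eq (h : IsMSSPwith Pr P₀ P π θ) (j : ι) {A : Set ℝ} (hA : MeasurableSet A) :
    ∫⁻ ω, P j ω A ∂Pr = P₀ A := by
  have hθm := h.measθ; have hπm := h.measπ; have hind := h.indepθπ; have hlaw := h.lawθ
  have key : ∀ n, ∫⁻ ω, Ifn θ A n ω * Wf π j n ω ∂Pr = P₀ A * ∫⁻ ω, Wf π j n ω ∂Pr :=
    fun n => by simpa [Wf] using lint_I_G hθm hπm hind hlaw hA n _ (measG_eval j n)
  have hnorm : ∫⁻ ω, (∑' n, Wf π j n ω) + Cf π j ω ∂Pr = 1 := by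
    rw [lintegral_congr_ae (by filter_upwards [ae_mix h j] with ω hω using hω.2 :
      (fun ω => (∑' n, Wf π j n ω) + Cf π j ω) =ᵐ[Pr] fun _ => 1)]
    simp
  calc ∫⁻ ω, P j ω A ∂Pr
      = ∫⁻ ω, (∑' n, Wf π j n ω * Ifn θ A n ω) + Cf π j ω * P₀ A ∂Pr :=
        lintegral_congr_ae (by filter_upwards [ae_mix h j] with ω hω using hω.1 A hA)
    _ = (∑' n, ∫⁻ ω, Wf π j n ω * Ifn θ A n ω ∂Pr) + (∫⁻ ω, Cf π j ω ∂Pr) * P₀ A := by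
        rw [lintegral_add_left
          (Measurable.ennreal_tsum (f := fun n ω => Wf π j n ω * Ifn θ A n ω) fun n => (measWf hπm j n).mul (measIfn hθm hA n)),
          lintegral_tsum (f := fun n ω => Wf π j n ω * Ifn θ A n ω) fun n => ((measWf hπm j n).mul (measIfn hθm hA n)).aemeasurable,
          lintegral_mul_const _ (measCf hπm j)]
    _ = (∑' n, P₀ A * ∫⁻ ω, Wf π j n ω ∂Pr) + (∫⁻ ω, Cf π j ω ∂Pr) * P₀ A := by
        congr 1
        exact tsum_congr fun n => by
          rw [lintegral_congr fun ω => mul_comm (Wf π j n ω) (Ifn θ A n ω), key n]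
    _ = P₀ A * ((∑' n, ∫⁻ ω, Wf π j n ω ∂Pr) + ∫⁻ ω, Cf π j ω ∂Pr) := by
        rw [ENNReal.tsum_mul_left]; ring
    _ = P₀ A * ∫⁻ ω, (∑' n, Wf π j n ω) + Cf π j ω ∂Pr := by
        rw [lintegral_add_left (Measurable.ennreal_tsum fun n => measWf hπm j n),
          lintegral_tsum fun n => (measWf hπm j n).aemeasurable]
    _ = P₀ A := by rw [hnorm, mul_one]

/-- The marginal law of each observation is `P₀`. -/
lemma map_eq_base (h : IsMSSPwith Pr P₀ P π θ) (hX : IsSample Pr P X) (j : ι) (i : ℕ) :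
    Pr.map (X j i) = P₀ := by
  ext A hA
  rw [Measure.map_apply (hX.1 j i) hA]
  have hs := hX.2 {(j,i)} (fun _ => A) (fun p _ => hA)
  have hset : {ω | ∀ p ∈ ({(j,i)} : Finset (ι × ℕ)), X p.1 p.2 ω ∈ (fun _ => A) p}
      = X j i ⁻¹' A := by ext ω; simp
  rw [hset] at hs
  rw [hs]
  calc ∫⁻ ω, ∏ p ∈ ({(j,i)} : Finset (ι × ℕ)), P p.1 ω ((fun _ => A) p) ∂Pr
      = ∫⁻ ω, P j ω A ∂Pr := by simp
    _ = P₀ A := lint_P_eq h j hA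


lemma expand (f₁ f₂ g₁ g₂ : ℕ → ℝ≥0∞) (c d a b : ℝ≥0∞) :
    ((∑' n, f₁ n * g₁ n) + c * a) * ((∑' n, f₂ n * g₂ n) + d * b)
      = (∑' n, ∑' l, (g₁ n * g₂ l) * (f₁ n * f₂ l))
        + ((∑' n, g₁ n * (f₁ n * d)) * b
        + ((∑' l, g₂ l * (c * f₂ l)) * a
        + (c * d) * (a * b))) := by
  have h1 : ((∑' n, f₁ n * g₁ n)) * ((∑' l, f₂ l * g₂ l))
      = ∑' n, ∑' l, (g₁ n * g₂ l) * (f₁ n * f₂ l) := by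
    rw [← ENNReal.tsum_mul_right]
    refine tsum_congr fun n => ?_
    rw [← ENNReal.tsum_mul_left]
    exact tsum_congr fun l => by ring
  have h2 : (∑' n, f₁ n * g₁ n) * (d * b) = (∑' n, g₁ n * (f₁ n * d)) * b := by
    rw [← ENNReal.tsum_mul_right, ← ENNReal.tsum_mul_right]
    exact tsum_congr fun n => by ring
  have h3 : (c * a) * (∑' l, f₂ l * g₂ l) = (∑' l, g₂ l * (c * f₂ l)) * a := by
    rw [← ENNReal.tsum_mul_left, ← ENNReal.tsum_mul_right]
    exact tsum_congr fun l => by ring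
  calc ((∑' n, f₁ n * g₁ n) + c * a) * ((∑' n, f₂ n * g₂ n) + d * b)
      = (∑' n, f₁ n * g₁ n) * (∑' l, f₂ l * g₂ l)
        + ((∑' n, f₁ n * g₁ n) * (d * b)
        + ((c * a) * (∑' l, f₂ l * g₂ l) + (c * a) * (d * b))) := by ring
    _ = _ := by rw [h1, h2, h3]; ring

/-- The main joint computation on rectangles. -/
lemma lint_mix_mul (h : IsMSSPwith Pr P₀ P π θ) (j k : ι)
    {A B : Set ℝ} (hA : MeasurableSet A) (hB : MeasurableSet B) :
    ∫⁻ ω, P j ω A * P k ω B ∂Pr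
      = pwt Pr π j k * P₀ (A ∩ B) + qwt Pr π j k * (P₀ A * P₀ B) := by
  have hθm := h.measθ; have hπm := h.measπ; have hind := h.indepθπ
  have hlaw := h.lawθ; have hiid := h.iidθ
  -- measurability of the pieces
  have mterm : ∀ n l, Measurable fun ω =>
      (Ifn θ A n ω * Ifn θ B l ω) * (Wf π j n ω * Wf π k l ω) := fun n l =>
    ((measIfn hθm hA n).mul (measIfn hθm hB l)).mul ((measWf hπm j n).mul (measWf hπm k l))
  have mT1 : Measurable fun ω =>
      ∑' n, ∑' l, (Ifn θ A n ω * Ifn θ B l ω) * (Wf π j n ω * Wf π k l ω) :=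
    Measurable.ennreal_tsum fun n => Measurable.ennreal_tsum fun l => mterm n l
  have mI2 : ∀ n, Measurable fun ω => Ifn θ A n ω * (Wf π j n ω * Cf π k ω) := fun n =>
    (measIfn hθm hA n).mul ((measWf hπm j n).mul (measCf hπm k))
  have mI3 : ∀ l, Measurable fun ω => Ifn θ B l ω * (Cf π j ω * Wf π k l ω) := fun l =>
    (measIfn hθm hB l).mul ((measCf hπm j).mul (measWf hπm k l))
  have mT2 : Measurable fun ω => (∑' n, Ifn θ A n ω * (Wf π j n ω * Cf π k ω)) * P₀ B :=
    (Measurable.ennreal_tsum mI2).mul_const _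
  have mT3 : Measurable fun ω => (∑' l, Ifn θ B l ω * (Cf π j ω * Wf π k l ω)) * P₀ A :=
    (Measurable.ennreal_tsum mI3).mul_const _
  -- term evaluations
  have hAB : ∀ n, ∫⁻ ω, (Ifn θ A n ω * Ifn θ B n ω) * (Wf π j n ω * Wf π k n ω) ∂Pr
      = P₀ (A ∩ B) * ew Pr π j k n n := by
    intro n
    have h1 : ∀ ω, Ifn θ A n ω * Ifn θ B n ω = Ifn θ (A ∩ B) n ω := fun ω => by
      simp only [Ifn]
      rw [Set.inter_indicator_one]
      rfl
    calc ∫⁻ ω, (Ifn θ A n ω * Ifn θ B n ω) * (Wf π j n ω * Wf π k n ω) ∂Pr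
        = ∫⁻ ω, Ifn θ (A ∩ B) n ω * (Wf π j n ω * Wf π k n ω) ∂Pr :=
          lintegral_congr fun ω => by rw [h1 ω]
      _ = P₀ (A ∩ B) * ew Pr π j k n n := by
          simpa [Wf, ew] using lint_I_G hθm hπm hind hlaw (hA.inter hB) n
            (fun u => ENNReal.ofReal (u j n) * ENNReal.ofReal (u k n))
            ((measG_eval j n).mul (measG_eval k n))
  have hABne : ∀ n l, l ≠ n →
      ∫⁻ ω, (Ifn θ A n ω * Ifn θ B l ω) * (Wf π j n ω * Wf π k l ω) ∂Pr
        = (P₀ A * P₀ B) * ew Pr π j k n l := by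
    intro n l hnl
    simpa [Wf, ew, mul_assoc] using lint_II_G hθm hπm hind hlaw hiid hA hB
      (Ne.symm hnl)
      (fun u => ENNReal.ofReal (u j n) * ENNReal.ofReal (u k l))
      ((measG_eval j n).mul (measG_eval k l))
  have hWD : ∀ n, ∫⁻ ω, Ifn θ A n ω * (Wf π j n ω * Cf π k ω) ∂Pr
      = P₀ A * ∫⁻ ω, Wf π j n ω * Cf π k ω ∂Pr := fun n => by
    simpa [Wf, Cf] using lint_I_G hθm hπm hind hlaw hA n
      (fun u => ENNReal.ofReal (u j n) * (1 - ∑' l, ENNReal.ofReal (u k l)))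
      ((measG_eval j n).mul (measG_C k))
  have hCV : ∀ l, ∫⁻ ω, Ifn θ B l ω * (Cf π j ω * Wf π k l ω) ∂Pr
      = P₀ B * ∫⁻ ω, Cf π j ω * Wf π k l ω ∂Pr := fun l => by
    simpa [Wf, Cf] using lint_I_G hθm hπm hind hlaw hB l
      (fun u => (1 - ∑' n, ENNReal.ofReal (u j n)) * ENNReal.ofReal (u k l))
      ((measG_C j).mul (measG_eval k l))
  -- the four integrals
  have E1 : ∫⁻ ω, (∑' n, ∑' l, (Ifn θ A n ω * Ifn θ B l ω) * (Wf π j n ω * Wf π k l ω)) ∂Pr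
      = P₀ (A ∩ B) * pwt Pr π j k
        + (P₀ A * P₀ B) * (∑' n, ∑' l, if l = n then 0 else ew Pr π j k n l) := by
    rw [lintegral_tsum fun n =>
      (Measurable.ennreal_tsum fun l => mterm n l).aemeasurable]
    have hn : ∀ n, ∫⁻ ω, (∑' l, (Ifn θ A n ω * Ifn θ B l ω) * (Wf π j n ω * Wf π k l ω)) ∂Pr
        = P₀ (A ∩ B) * ew Pr π j k n n
          + (P₀ A * P₀ B) * ∑' l, if l = n then 0 else ew Pr π j k n l := by
      intro n
      rw [lintegral_tsum fun l => (mterm n l).aemeasurable]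
      have hterm : ∀ l, ∫⁻ ω, (Ifn θ A n ω * Ifn θ B l ω) * (Wf π j n ω * Wf π k l ω) ∂Pr
          = if l = n then P₀ (A ∩ B) * ew Pr π j k n n
            else (P₀ A * P₀ B) * ew Pr π j k n l := by
        intro l
        by_cases hl : l = n
        · subst hl; rw [if_pos rfl]; exact hAB l
        · rw [if_neg hl]; exact hABne n l hl
      rw [tsum_congr hterm, ENNReal.summable.tsum_eq_add_tsum_ite' n, if_pos rfl]
      congr 1
      rw [← ENNReal.tsum_mul_left]
      exact tsum_congr fun l => by by_cases hl : l = n <;> simp [hl]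
    rw [tsum_congr hn, ENNReal.tsum_add, ENNReal.tsum_mul_left, ENNReal.tsum_mul_left]
    rfl
  have E2 : ∫⁻ ω, (∑' n, Ifn θ A n ω * (Wf π j n ω * Cf π k ω)) ∂Pr
      = P₀ A * ∑' n, ∫⁻ ω, Wf π j n ω * Cf π k ω ∂Pr := by
    rw [lintegral_tsum fun n => (mI2 n).aemeasurable, tsum_congr hWD,
      ENNReal.tsum_mul_left]
  have E3 : ∫⁻ ω, (∑' l, Ifn θ B l ω * (Cf π j ω * Wf π k l ω)) ∂Pr
      = P₀ B * ∑' l, ∫⁻ ω, Cf π j ω * Wf π k l ω ∂Pr := by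
    rw [lintegral_tsum fun l => (mI3 l).aemeasurable, tsum_congr hCV,
      ENNReal.tsum_mul_left]
  -- assemble
  calc ∫⁻ ω, P j ω A * P k ω B ∂Pr
      = ∫⁻ ω, ((∑' n, Wf π j n ω * Ifn θ A n ω) + Cf π j ω * P₀ A)
          * ((∑' l, Wf π k l ω * Ifn θ B l ω) + Cf π k ω * P₀ B) ∂Pr := by
        refine lintegral_congr_ae ?_
        filter_upwards [ae_mix h j, ae_mix h k] with ω h1 h2
        rw [h1.1 A hA, h2.1 B hB]
    _ = ∫⁻ ω, (∑' n, ∑' l, (Ifn θ A n ω * Ifn θ B l ω) * (Wf π j n ω * Wf π k l ω))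
          + ((∑' n, Ifn θ A n ω * (Wf π j n ω * Cf π k ω)) * P₀ B
          + ((∑' l, Ifn θ B l ω * (Cf π j ω * Wf π k l ω)) * P₀ A
          + (Cf π j ω * Cf π k ω) * (P₀ A * P₀ B))) ∂Pr :=
        lintegral_congr fun ω => expand _ _ _ _ _ _ _ _
    _ = (∫⁻ ω, (∑' n, ∑' l, (Ifn θ A n ω * Ifn θ B l ω) * (Wf π j n ω * Wf π k l ω)) ∂Pr)
          + ((∫⁻ ω, (∑' n, Ifn θ A n ω * (Wf π j n ω * Cf π k ω)) ∂Pr) * P₀ B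
          + ((∫⁻ ω, (∑' l, Ifn θ B l ω * (Cf π j ω * Wf π k l ω)) ∂Pr) * P₀ A
          + (∫⁻ ω, Cf π j ω * Cf π k ω ∂Pr) * (P₀ A * P₀ B))) := by
        rw [lintegral_add_left mT1, lintegral_add_left mT2, lintegral_add_left mT3,
          lintegral_mul_const _ (Measurable.ennreal_tsum mI2),
          lintegral_mul_const _ (Measurable.ennreal_tsum mI3),
          lintegral_mul_const (f := fun ω => Cf π j ω * Cf π k ω) _ ((measCf hπm j).mul (measCf hπm k))]
    _ = pwt Pr π j k * P₀ (A ∩ B) + qwt Pr π j k * (P₀ A * P₀ B) := by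
        rw [E1, E2, E3]
        simp only [qwt]
        ring

lemma joint_rect (h : IsMSSPwith Pr P₀ P π θ) (hX : IsSample Pr P X)
    {j k : ι} {i m : ℕ} (hne : (j, i) ≠ (k, m))
    {A B : Set ℝ} (hA : MeasurableSet A) (hB : MeasurableSet B) :
    Pr {ω | X j i ω ∈ A ∧ X k m ω ∈ B}
      = pwt Pr π j k * P₀ (A ∩ B) + qwt Pr π j k * (P₀ A * P₀ B) := by
  classical
  have hne' : (k, m) ≠ (j, i) := fun hc => hne hc.symm
  set s : Finset (ι × ℕ) := {(j, i), (k, m)} with hs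
  set A' : ι × ℕ → Set ℝ := fun p => if p = (j, i) then A else B with hA'
  have hmeas : ∀ p ∈ s, MeasurableSet (A' p) := by
    intro p _
    by_cases hp : p = (j, i) <;> simp [A', hp, hA, hB]
  have hji : A' (j, i) = A := if_pos rfl
  have hkm : A' (k, m) = B := if_neg hne'
  have h2 := hX.2 s A' hmeas
  have hset : {ω | ∀ p ∈ s, X p.1 p.2 ω ∈ A' p} = {ω | X j i ω ∈ A ∧ X k m ω ∈ B} := by
    ext ω
    simp [s, A', hne']
  have hprod : ∀ ω, ∏ p ∈ s, P p.1 ω (A' p) = P j ω A * P k ω B := by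
    intro ω
    rw [hs, Finset.prod_pair hne, hji, hkm]
  rw [hset] at h2
  rw [h2, lintegral_congr fun ω => hprod ω]
  exact lint_mix_mul h j k hA hB

lemma pq_sum (h : IsMSSPwith Pr P₀ P π θ) (hX : IsSample Pr P X)
    {j k : ι} {i m : ℕ} (hne : (j, i) ≠ (k, m)) :
    pwt Pr π j k + qwt Pr π j k = 1 := by
  have h1 := joint_rect h hX hne MeasurableSet.univ MeasurableSet.univ
  simp only [Set.univ_inter, Set.mem_univ, and_self, Set.setOf_true, measure_univ,
    mul_one, one_mul] at h1
  exact h1.symm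

lemma joint_law (h : IsMSSPwith Pr P₀ P π θ) (hX : IsSample Pr P X)
    {j k : ι} {i m : ℕ} (hne : (j, i) ≠ (k, m)) :
    Pr.map (fun ω => (X j i ω, X k m ω))
      = pwt Pr π j k • P₀.map (fun x => (x, x)) + qwt Pr π j k • (P₀.prod P₀) := by
  have hpq := pq_sum h hX hne
  have hp1 : pwt Pr π j k ≤ 1 := hpq ▸ le_self_add
  have hq1 : qwt Pr π j k ≤ 1 := hpq ▸ le_add_self
  have hpair : Measurable fun ω => (X j i ω, X k m ω) := (hX.1 j i).prodMk (hX.1 k m)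
  have hdM : Measurable fun x : ℝ => (x, x) := measurable_id.prodMk measurable_id
  haveI : IsFiniteMeasure (Pr.map (fun ω => (X j i ω, X k m ω))) :=
    Measure.isFiniteMeasure_map Pr _
  refine ext_of_generate_finite _ generateFrom_prod.symm isPiSystem_prod ?_ ?_
  · rintro _ ⟨A, hA, B, hB, rfl⟩
    simp only [Set.mem_setOf_eq] at hA hB
    rw [Measure.map_apply hpair (hA.prod hB)]
    have hpre : (fun ω => (X j i ω, X k m ω)) ⁻¹' (A ×ˢ B)
        = {ω | X j i ω ∈ A ∧ X k m ω ∈ B} := rfl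
    rw [hpre, joint_rect h hX hne hA hB]
    simp only [Measure.add_apply, Measure.smul_apply, smul_eq_mul]
    rw [Measure.map_apply hdM (hA.prod hB), Measure.prod_prod]
    have hdiag : (fun x : ℝ => (x, x)) ⁻¹' (A ×ˢ B) = A ∩ B := rfl
    rw [hdiag]
  · rw [Measure.map_apply hpair MeasurableSet.univ]
    simp only [Set.preimage_univ, measure_univ, Measure.add_apply, Measure.smul_apply,
      smul_eq_mul]
    rw [Measure.map_apply hdM MeasurableSet.univ]
    simp [measure_univ, hpq]

lemma tie_prob [NullSingletonClass P₀] (h : IsMSSPwith Pr P₀ P π θ) (hX : IsSample Pr P X)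
    {j k : ι} {i m : ℕ} (hne : (j, i) ≠ (k, m)) :
    Pr {ω | X j i ω = X k m ω} = pwt Pr π j k := by
  have hpair : Measurable fun ω => (X j i ω, X k m ω) := (hX.1 j i).prodMk (hX.1 k m)
  have hdM : Measurable fun x : ℝ => (x, x) := measurable_id.prodMk measurable_id
  have hD : MeasurableSet {z : ℝ × ℝ | z.1 = z.2} :=
    measurableSet_eq_fun measurable_fst measurable_snd
  have hset : {ω | X j i ω = X k m ω}
      = (fun ω => (X j i ω, X k m ω)) ⁻¹' {z | z.1 = z.2} := rfl
  rw [hset, ← Measure.map_apply hpair hD, joint_law h hX hne]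
  simp only [Measure.add_apply, Measure.smul_apply, smul_eq_mul]
  rw [Measure.map_apply hdM hD]
  have h1 : (fun x : ℝ => (x, x)) ⁻¹' {z : ℝ × ℝ | z.1 = z.2} = Set.univ := by
    ext x; simp
  have h2 : (P₀.prod P₀) {z : ℝ × ℝ | z.1 = z.2} = 0 := by
    rw [Measure.prod_apply hD]
    have hsl : ∀ x : ℝ, P₀ (Prod.mk x ⁻¹' {z : ℝ × ℝ | z.1 = z.2}) = 0 := by
      intro x
      have : (Prod.mk x ⁻¹' {z : ℝ × ℝ | z.1 = z.2}) = {x} := by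
        ext y; simp [eq_comm]
      rw [this]
      exact measure_singleton x
    simp [hsl]
  rw [h1, h2, measure_univ, mul_one, mul_zero, add_zero]

end Aux

/-- For a multivariate species sampling process on `ℝ` whose base measure has
a finite second moment, the correlation between any two distinct observations equals their tie
probability. -/
theorem mSSP_correlation_observations {Ω : Type*} [MeasurableSpace Ω] {ι : Type*}
    (Pr : Measure Ω) [IsProbabilityMeasure Pr]
    (P₀ : Measure ℝ) [IsProbabilityMeasure P₀] [NullSingletonClass P₀]
    (hmom : Integrable (fun x => x ^ 2) P₀)
    (P : ι → Ω → Measure ℝ) (hP : IsMSSP Pr P₀ P)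
    (X : ι → ℕ → Ω → ℝ) (hX : IsSample Pr P X)
    (j k : ι) (i m : ℕ) (hne : (j, i) ≠ (k, m)) :
    corrR Pr (X j i) (X k m) = (Pr {ω | X j i ω = X k m ω}).toReal := by
  obtain ⟨π, θ, h⟩ := hP
  have hXm1 := hX.1 j i
  have hXm2 := hX.1 k m
  have hmap1 : Pr.map (X j i) = P₀ := map_eq_base h hX j i
  have hmap2 : Pr.map (X k m) = P₀ := map_eq_base h hX k m
  have hpair : Measurable fun ω => (X j i ω, X k m ω) := hXm1.prodMk hXm2
  have hdM : Measurable fun x : ℝ => (x, x) := measurable_id.prodMk measurable_id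
  set μ₀ : ℝ := ∫ x, x ∂P₀ with hμ₀
  set M2 : ℝ := ∫ x, x ^ 2 ∂P₀ with hM2
  -- integrability of the identity
  have hid_int : Integrable (fun x : ℝ => x) P₀ := by
    have hg : Integrable (fun x : ℝ => 1 + x ^ 2) P₀ := (integrable_const 1).add hmom
    refine hg.mono' measurable_id.aestronglyMeasurable ?_
    filter_upwards with x
    rw [Real.norm_eq_abs]
    nlinarith [sq_nonneg (|x| - 1), sq_abs x, abs_nonneg x]
  -- second moments
  have hmem0 : MemLp (fun x : ℝ => x) 2 P₀ :=
    (memLp_two_iff_integrable_sq (f := fun x : ℝ => x) measurable_id.aestronglyMeasurable).2 hmom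
  have hmem1 : MemLp (X j i) 2 Pr := by
    have := (memLp_map_measure_iff (g := fun x : ℝ => x) measurable_id.aestronglyMeasurable
      hXm1.aemeasurable).1 (by rw [hmap1]; exact hmem0)
    exact this
  have hmem2 : MemLp (X k m) 2 Pr := by
    have := (memLp_map_measure_iff (g := fun x : ℝ => x) measurable_id.aestronglyMeasurable
      hXm2.aemeasurable).1 (by rw [hmap2]; exact hmem0)
    exact this
  -- first moments
  have hEj : ∫ ω, X j i ω ∂Pr = μ₀ := by
    rw [hμ₀, ← hmap1, integral_map (f := fun x : ℝ => x) hXm1.aemeasurable measurable_id.aestronglyMeasurable]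
  have hEk : ∫ ω, X k m ω ∂Pr = μ₀ := by
    rw [hμ₀, ← hmap2, integral_map (f := fun x : ℝ => x) hXm2.aemeasurable measurable_id.aestronglyMeasurable]
  have hE2j : ∫ ω, X j i ω ^ 2 ∂Pr = M2 := by
    rw [hM2, ← hmap1, integral_map (f := fun x : ℝ => x ^ 2) hXm1.aemeasurable (measurable_id.pow_const 2).aestronglyMeasurable]
  have hE2k : ∫ ω, X k m ω ^ 2 ∂Pr = M2 := by
    rw [hM2, ← hmap2, integral_map (f := fun x : ℝ => x ^ 2) hXm2.aemeasurable (measurable_id.pow_const 2).aestronglyMeasurable]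
  -- variances
  have hvarj : variance (X j i) Pr = M2 - μ₀ ^ 2 := by
    rw [variance_eq_sub hmem1]
    simp only [Pi.pow_apply]
    rw [hE2j, hEj]
  have hvark : variance (X k m) Pr = M2 - μ₀ ^ 2 := by
    rw [variance_eq_sub hmem2]
    simp only [Pi.pow_apply]
    rw [hE2k, hEk]
  have hvar0 : variance (fun x : ℝ => x) P₀ = M2 - μ₀ ^ 2 := by
    rw [variance_eq_sub hmem0]
    simp only [Pi.pow_apply]
    rfl
  -- positivity of the variance
  have hpos : 0 < M2 - μ₀ ^ 2 := by
    rcases lt_or_eq_of_le (variance_nonneg (fun x : ℝ => x) P₀) with hlt | heq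
    · rwa [hvar0] at hlt
    · exfalso
      have hM0 : M2 - μ₀ ^ 2 = 0 := by rw [← hvar0, ← heq]
      have hint2 : Integrable (fun x : ℝ => x ^ 2 - 2 * μ₀ * x + μ₀ ^ 2) P₀ :=
        (hmom.sub (hid_int.const_mul (2 * μ₀))).add (integrable_const _)
      have hint : Integrable (fun x : ℝ => (x - μ₀) ^ 2) P₀ :=
        hint2.congr (Filter.Eventually.of_forall fun x => by ring)
      have hexp : ∫ x, (x - μ₀) ^ 2 ∂P₀ = M2 - μ₀ ^ 2 := by
        have h1 : (fun x : ℝ => (x - μ₀) ^ 2)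
            = fun x : ℝ => x ^ 2 - 2 * μ₀ * x + μ₀ ^ 2 := by
          funext x; ring
        have ia : Integrable (fun x : ℝ => x ^ 2 - 2 * μ₀ * x) P₀ :=
          hmom.sub (hid_int.const_mul (2 * μ₀))
        have ic : Integrable (fun x : ℝ => 2 * μ₀ * x) P₀ := hid_int.const_mul (2 * μ₀)
        rw [h1, integral_add ia (integrable_const _), integral_sub hmom ic,
          integral_const_mul, integral_const]
        simp only [measure_univ, probReal_univ, ENNReal.toReal_one, smul_eq_mul, one_mul]
        rw [← hμ₀, ← hM2]
        ring
      have hzero : ∫ x, (x - μ₀) ^ 2 ∂P₀ = 0 := by rw [hexp, hM0]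
      have hae : ∀ᵐ x ∂P₀, (x - μ₀) ^ 2 = 0 := by
        have := (integral_eq_zero_iff_of_nonneg (fun x => sq_nonneg _) hint).1 hzero
        filter_upwards [this] with x hx using hx
      have hae2 : ∀ᵐ x ∂P₀, x = μ₀ := by
        filter_upwards [hae] with x hx
        have h2 := pow_eq_zero_iff (n := 2) (by norm_num) |>.1 hx
        linarith [sub_eq_zero.1 h2]
      have hcompl : P₀ {μ₀}ᶜ = 0 := by
        have hs : {x : ℝ | ¬ x = μ₀} = {μ₀}ᶜ := by ext x; simp
        rw [← hs]
        exact hae2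
      have hone : (1 : ℝ≥0∞) ≤ 0 := by
        calc (1 : ℝ≥0∞) = P₀ Set.univ := (measure_univ).symm
          _ = P₀ ({μ₀} ∪ {μ₀}ᶜ) := by rw [Set.union_compl_self]
          _ ≤ P₀ {μ₀} + P₀ {μ₀}ᶜ := measure_union_le _ _
          _ = 0 := by rw [measure_singleton, hcompl, add_zero]
      simp at hone
  -- the weights
  have hppq : pwt Pr π j k + qwt Pr π j k = 1 := pq_sum h hX hne
  have hp_ne : pwt Pr π j k ≠ ⊤ :=
    ne_top_of_le_ne_top ENNReal.one_ne_top (hppq ▸ le_self_add)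
  have hq_ne : qwt Pr π j k ≠ ⊤ :=
    ne_top_of_le_ne_top ENNReal.one_ne_top (hppq ▸ le_add_self)
  have hpq' : (pwt Pr π j k).toReal + (qwt Pr π j k).toReal = 1 := by
    rw [← ENNReal.toReal_add hp_ne hq_ne, hppq, ENNReal.toReal_one]
  -- second joint moment
  have hintΔ : Integrable (fun z : ℝ × ℝ => z.1 * z.2) (P₀.map (fun x => (x, x))) := by
    rw [integrable_map_measure (g := fun z : ℝ × ℝ => z.1 * z.2) (measurable_fst.mul measurable_snd).aestronglyMeasurable
      hdM.aemeasurable]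
    have hc : ((fun z : ℝ × ℝ => z.1 * z.2) ∘ fun x : ℝ => (x, x)) = fun x : ℝ => x ^ 2 := by
      funext x; simp [pow_two]
    rw [hc]
    exact hmom
  have hintP : Integrable (fun z : ℝ × ℝ => z.1 * z.2) (P₀.prod P₀) :=
    Integrable.mul_prod hid_int hid_int
  have hEXY : ∫ ω, X j i ω * X k m ω ∂Pr
      = (pwt Pr π j k).toReal * M2 + (qwt Pr π j k).toReal * (μ₀ * μ₀) := by
    have h1 : ∫ ω, X j i ω * X k m ω ∂Pr
        = ∫ z : ℝ × ℝ, z.1 * z.2 ∂(Pr.map (fun ω => (X j i ω, X k m ω))) := by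
      rw [integral_map (f := fun z : ℝ × ℝ => z.1 * z.2) hpair.aemeasurable
        (measurable_fst.mul measurable_snd).aestronglyMeasurable]
    rw [h1, joint_law h hX hne,
      integral_add_measure (hintΔ.smul_measure hp_ne) (hintP.smul_measure hq_ne),
      integral_smul_measure, integral_smul_measure]
    have h2 : ∫ z : ℝ × ℝ, z.1 * z.2 ∂(P₀.map (fun x => (x, x))) = M2 := by
      rw [integral_map (f := fun z : ℝ × ℝ => z.1 * z.2) hdM.aemeasurable
        (measurable_fst.mul measurable_snd).aestronglyMeasurable]
      simp only [hM2]
      exact integral_congr_ae (by filter_upwards with x using (pow_two x).symm)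
    have h3 : ∫ z : ℝ × ℝ, z.1 * z.2 ∂(P₀.prod P₀) = μ₀ * μ₀ :=
      integral_prod_mul (fun x : ℝ => x) (fun x : ℝ => x)
    rw [h2, h3, smul_eq_mul, smul_eq_mul]
  -- tie probability
  have htie : Pr {ω | X j i ω = X k m ω} = pwt Pr π j k := tie_prob h hX hne
  -- conclusion
  rw [htie, corrR, covR, hEXY, hEj, hEk, hvarj, hvark,
    Real.mul_self_sqrt (le_of_lt hpos)]
  have hq : (qwt Pr π j k).toReal = 1 - (pwt Pr π j k).toReal := by linarith
  rw [hq]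
  field_simp
  ring


end MSSP
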